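/- If the sampling conditions of the over-estimated support proposition hold and μ₁,…,μ_Q is a basis of the space of trigonometric polynomials with support in Γ vanishing at all sample points, then the sum-of-squares function γ(x) = ∑_{i=1}^Q |μ_i(x)|² vanishes at x if and only if ψ(x) = 0. That is, the zero level set of γ equals the zero level set of the minimal polynomial ψ. -/

import Mathlib

open scoped Real

noncomputable def rectZ (a b : ℕ) : Finset (ℤ × ℤ) := Finset.Ico (0 : ℤ) (a : ℤ) ×ˢ Finset.Ico (0 : ℤ) (b : ℤ)

noncomputable def trigExp (k : ℤ × ℤ) (x : ℝ × ℝ) : ℂ :=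
  Complex.exp (2 * Real.pi * Complex.I * ((k.1 : ℂ) * (x.1 : ℂ) + (k.2 : ℂ) * (x.2 : ℂ)))

noncomputable def trigPolyZ (Λ : Finset (ℤ × ℤ)) (c : ℤ × ℤ → ℂ) (x : ℝ × ℝ) : ℂ :=
  ∑ k ∈ Λ, c k * trigExp k x

noncomputable def assocPolyZ (Λ : Finset (ℤ × ℤ)) (c : ℤ × ℤ → ℂ) : MvPolynomial (Fin 2) ℂ :=
  ∑ k ∈ Λ, MvPolynomial.C (c k) * MvPolynomial.X 0 ^ k.1.toNat * MvPolynomial.X 1 ^ k.2.toNat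


open MvPolynomial

namespace SOS
noncomputable section

def boxSet (α β : ℕ) : Set (Fin 2 →₀ ℕ) := {m | m 0 ≤ α ∧ m 1 ≤ β}

def box (α β : ℕ) : Submodule ℂ (MvPolynomial (Fin 2) ℂ) :=
  restrictSupport ℂ (boxSet α β)

lemma mem_box {α β : ℕ} {q : MvPolynomial (Fin 2) ℂ} :
    q ∈ box α β ↔ degreeOf 0 q ≤ α ∧ degreeOf 1 q ≤ β := by
  rw [box, mem_restrictSupport_iff, degreeOf_le_iff, degreeOf_le_iff]
  constructor
  · intro h
    exact ⟨fun m hm => (h hm).1, fun m hm => (h hm).2⟩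
  · rintro ⟨h1, h2⟩ m hm
    exact ⟨h1 m hm, h2 m hm⟩

def boxEquiv (α β : ℕ) : boxSet α β ≃ (Fin (α+1) × Fin (β+1)) where
  toFun m := (⟨m.1 0, Nat.lt_succ_of_le m.2.1⟩, ⟨m.1 1, Nat.lt_succ_of_le m.2.2⟩)
  invFun p := ⟨Finsupp.equivFunOnFinite.symm ![p.1.1, p.2.1], by
    constructor <;> simp [boxSet] <;> omega⟩
  left_inv := by
    rintro ⟨m, hm⟩
    ext i
    fin_cases i <;> simp
  right_inv := by
    rintro ⟨i, j⟩
    ext <;> simp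

instance boxFinite (α β : ℕ) : Module.Finite ℂ (box α β) :=
  Module.Finite.of_basis ((basisRestrictSupport ℂ (boxSet α β)).reindex (boxEquiv α β))

lemma finrank_box (α β : ℕ) : Module.finrank ℂ (box α β) = (α+1)*(β+1) := by
  rw [show box α β = restrictSupport ℂ (boxSet α β) from rfl, Module.finrank_eq_card_basis ((basisRestrictSupport ℂ (boxSet α β)).reindex (boxEquiv α β))]
  simp


lemma degreeOf_mul_eq₀ (f g : MvPolynomial (Fin 2) ℂ) (hf : f ≠ 0) (hg : g ≠ 0) :
    degreeOf 0 (f * g) = degreeOf 0 f + degreeOf 0 g := by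
  have hf' : (MvPolynomial.finSuccEquiv ℂ 1) f ≠ 0 :=
    (map_ne_zero_iff (MvPolynomial.finSuccEquiv ℂ 1)
      (AlgEquiv.injective (MvPolynomial.finSuccEquiv ℂ 1))).mpr hf
  have hg' : (MvPolynomial.finSuccEquiv ℂ 1) g ≠ 0 :=
    (map_ne_zero_iff (MvPolynomial.finSuccEquiv ℂ 1)
      (AlgEquiv.injective (MvPolynomial.finSuccEquiv ℂ 1))).mpr hg
  rw [← natDegree_finSuccEquiv, ← natDegree_finSuccEquiv, ← natDegree_finSuccEquiv,
    map_mul, Polynomial.natDegree_mul hf' hg']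

lemma degreeOf_mul_eq (i : Fin 2) (f g : MvPolynomial (Fin 2) ℂ) (hf : f ≠ 0) (hg : g ≠ 0) :
    degreeOf i (f * g) = degreeOf i f + degreeOf i g := by
  have key : degreeOf (1 : Fin 2) (f * g)
      = degreeOf (1 : Fin 2) f + degreeOf (1 : Fin 2) g := by
    set σ : Fin 2 ≃ Fin 2 := Equiv.swap 0 1 with hσ
    have hswap : σ (1 : Fin 2) = 0 := Equiv.swap_apply_right 0 1
    have hren : ∀ h : MvPolynomial (Fin 2) ℂ,
        degreeOf (1 : Fin 2) h = degreeOf 0 (rename (σ : Fin 2 → Fin 2) h) := by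
      intro h
      rw [← hswap, degreeOf_rename_of_injective σ.injective]
    have hne : ∀ h : MvPolynomial (Fin 2) ℂ, h ≠ 0 → rename (σ : Fin 2 → Fin 2) h ≠ 0 := by
      intro h hh h0
      exact hh (rename_injective (σ : Fin 2 → Fin 2) σ.injective (by simpa using h0))
    rw [hren, hren, hren, map_mul, degreeOf_mul_eq₀ _ _ (hne f hf) (hne g hg)]
  fin_cases i
  · exact degreeOf_mul_eq₀ f g hf hg
  · exact key


def vars (z : ℂ × ℂ) : Fin 2 → ℂ := ![z.1, z.2]

def evL {n : ℕ} (pts : Fin n → ℂ × ℂ) : MvPolynomial (Fin 2) ℂ →ₗ[ℂ] (Fin n → ℂ) where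
  toFun q := fun s => eval (vars (pts s)) q
  map_add' := by intros; funext s; simp
  map_smul' := by intros; funext s; simp [smul_eq_C_mul]


lemma degreeOf_sub_C_le (i j : Fin 2) (a : ℂ) :
    degreeOf i (X j - C a : MvPolynomial (Fin 2) ℂ) ≤ 1 := by
  rw [sub_eq_add_neg, ← map_neg C a]
  refine le_trans (degreeOf_add_le _ _ _) ?_
  simp [degreeOf_X, degreeOf_C]
  split <;> omega

lemma interp {n : ℕ} (pts : Fin n → ℂ × ℂ) (hinj : Function.Injective pts) (s₀ : Fin n)
    {α β : ℕ} (hα : n ≤ α + 1) (hβ : n ≤ β + 1) :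
    ∃ q ∈ box α β, ∀ s, eval (vars (pts s)) q = if s = s₀ then 1 else 0 := by
  classical
  set fac : Fin n → MvPolynomial (Fin 2) ℂ := fun t =>
    if (pts t).1 ≠ (pts s₀).1 then C ((pts s₀).1 - (pts t).1)⁻¹ * (X 0 - C (pts t).1)
    else C ((pts s₀).2 - (pts t).2)⁻¹ * (X 1 - C (pts t).2) with hfac
  have hdeg : ∀ (i : Fin 2) t, degreeOf i (fac t) ≤ 1 := by
    intro i t
    rw [hfac]
    dsimp only
    split <;>
    · refine le_trans (degreeOf_mul_le _ _ _) ?_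
      simpa [degreeOf_C] using degreeOf_sub_C_le i _ _
  have hself : ∀ t, t ≠ s₀ → eval (vars (pts s₀)) (fac t) = 1 := by
    intro t ht
    rw [hfac]
    dsimp only
    split_ifs with h
    · have h' : (pts s₀).1 - (pts t).1 ≠ 0 := sub_ne_zero.mpr (Ne.symm h)
      simp only [map_mul, map_sub, eval_C, eval_X]
      show ((pts s₀).1 - (pts t).1)⁻¹ * (vars (pts s₀) 0 - (pts t).1) = 1
      simp only [vars, Matrix.cons_val_zero]
      exact inv_mul_cancel₀ h'
    · push_neg at h
      have hne : (pts s₀).2 - (pts t).2 ≠ 0 := by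
        refine sub_ne_zero.mpr fun hw => ?_
        exact ht (hinj (Prod.ext h hw.symm))
      simp only [map_mul, map_sub, eval_C, eval_X]
      show ((pts s₀).2 - (pts t).2)⁻¹ * (vars (pts s₀) 1 - (pts t).2) = 1
      simp only [vars, Matrix.cons_val_one, Matrix.head_cons]
      exact inv_mul_cancel₀ hne
  have hzero : ∀ t, eval (vars (pts t)) (fac t) = 0 := by
    intro t
    rw [hfac]
    dsimp only
    split_ifs with h <;>
    · simp only [map_mul, map_sub, eval_C, eval_X]
      simp [vars]
  refine ⟨∏ t ∈ Finset.univ.erase s₀, fac t, ?_, ?_⟩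
  · rw [mem_box]
    constructor <;>
    · refine le_trans (degreeOf_prod_le _ _ _) ?_
      refine le_trans (Finset.sum_le_card_nsmul _ _ 1 (fun t _ => hdeg _ t)) ?_
      simp
      have := Finset.card_erase_le (s := (Finset.univ : Finset (Fin n))) (a := s₀)
      simp at this
      omega
  · intro s
    by_cases hs : s = s₀
    · subst hs
      rw [if_pos rfl, map_prod]
      exact Finset.prod_eq_one fun t ht => hself t (Finset.ne_of_mem_erase ht)
    · rw [if_neg hs, map_prod]
      exact Finset.prod_eq_zero (Finset.mem_erase.mpr ⟨hs, Finset.mem_univ s⟩) (hzero s)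

lemma ev_surj {n α β : ℕ} (pts : Fin n → ℂ × ℂ) (hinj : Function.Injective pts)
    (hα : n ≤ α + 1) (hβ : n ≤ β + 1) (v : Fin n → ℂ) :
    ∃ q ∈ box α β, ∀ s, eval (vars (pts s)) q = v s := by
  classical
  choose q hq hq2 using fun s₀ => interp pts hinj s₀ hα hβ
  refine ⟨∑ s₀, C (v s₀) * q s₀, ?_, ?_⟩
  · exact Submodule.sum_mem _ fun s₀ _ => by
      simpa [smul_eq_C_mul] using Submodule.smul_mem (box α β) (v s₀) (hq s₀)
  · intro s
    rw [map_sum]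
    rw [Finset.sum_eq_single s]
    · simp [hq2 s s]
    · intro t _ hts
      simp [hq2 t s, Ne.symm hts]
    · simp

set_option synthInstance.maxHeartbeats 1000000 in
set_option maxHeartbeats 1000000 in
lemma bezout {p P : MvPolynomial (Fin 2) ℂ} (hp : Irreducible p)
    {a b c d n : ℕ} (hpa : degreeOf 0 p ≤ a) (hpb : degreeOf 1 p ≤ b)
    (hPc : degreeOf 0 P ≤ c) (hPd : degreeOf 1 P ≤ d)
    (pts : Fin n → ℂ × ℂ) (hinj : Function.Injective pts)
    (hbound : a * d + b * c < n)
    (hzp : ∀ s, eval (vars (pts s)) p = 0) (hzP : ∀ s, eval (vars (pts s)) P = 0) :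
    p ∣ P := by
  by_contra hdvd
  have hpne : p ≠ 0 := hp.ne_zero
  have hPne : P ≠ 0 := fun h => hdvd (h ▸ dvd_zero p)
  set a0 := degreeOf 0 p with ha0
  set b0 := degreeOf 1 p with hb0
  set c0 := degreeOf 0 P with hc0
  set d0 := degreeOf 1 P with hd0
  have hbound' : a0 * d0 + b0 * c0 < n :=
    lt_of_le_of_lt (add_le_add (Nat.mul_le_mul hpa hPd) (Nat.mul_le_mul hpb hPc)) hbound
  set W := box (a0 + c0 + n) (b0 + d0 + n) with hW
  set U1 := Submodule.map (LinearMap.mulLeft ℂ p) (box (c0 + n) (d0 + n)) with hU1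
  set U2 := Submodule.map (LinearMap.mulLeft ℂ P) (box (a0 + n) (b0 + n)) with hU2
  -- finranks of U1, U2
  have hr1 : Module.finrank ℂ U1 = (c0+n+1)*(d0+n+1) := by
    rw [← (Submodule.equivMapOfInjective _ (mul_right_injective₀ hpne)
      (box (c0 + n) (d0 + n))).finrank_eq, finrank_box]
  have hr2 : Module.finrank ℂ U2 = (a0+n+1)*(b0+n+1) := by
    rw [← (Submodule.equivMapOfInjective _ (mul_right_injective₀ hPne)
      (box (a0 + n) (b0 + n))).finrank_eq, finrank_box]
  -- U1 ⊓ U2 is small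
  have hinf : U1 ⊓ U2 ≤ Submodule.map (LinearMap.mulLeft ℂ (p * P)) (box n n) := by
    rintro q ⟨hq1, hq2⟩
    obtain ⟨A, hA, rfl⟩ := hq1
    obtain ⟨B, hB, hBq⟩ := hq2
    simp only [LinearMap.mulLeft_apply] at hBq ⊢
    by_cases hq : p * A = 0
    · rw [hq]; exact (Submodule.map _ _).zero_mem
    have hBne : B ≠ 0 := by rintro rfl; rw [mul_zero] at hBq; exact hq hBq.symm
    have hdvdB : p ∣ B := by
      have hpP : p ∣ P * B := ⟨A, by rw [hBq]⟩
      rcases (UniqueFactorizationMonoid.irreducible_iff_prime.mp hp).2.2 _ _ hpP with h | h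
      · exact absurd h hdvd
      · exact h
    obtain ⟨h, rfl⟩ := hdvdB
    have hhne : h ≠ 0 := by rintro rfl; simp at hBne
    have hbox := mem_box.mp hB
    have hd0h : degreeOf 0 h ≤ n := by
      have := degreeOf_mul_eq 0 p h hpne hhne
      omega
    have hd1h : degreeOf 1 h ≤ n := by
      have := degreeOf_mul_eq 1 p h hpne hhne
      omega
    exact ⟨h, mem_box.mpr ⟨hd0h, hd1h⟩,
      by simp only [LinearMap.mulLeft_apply]; rw [← hBq]; ring⟩
  -- U1, U2 ≤ W and ≤ ker evL
  have hUW : ∀ q ∈ U1 ⊔ U2, q ∈ W := by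
    intro q hq
    refine (sup_le ?_ ?_ : U1 ⊔ U2 ≤ W) hq
    · rintro _ ⟨A, hA, rfl⟩
      simp only [LinearMap.mulLeft_apply]
      have := mem_box.mp hA
      refine mem_box.mpr ⟨?_, ?_⟩
      · exact le_trans (degreeOf_mul_le _ _ _) (by omega)
      · exact le_trans (degreeOf_mul_le _ _ _) (by omega)
    · rintro _ ⟨A, hA, rfl⟩
      simp only [LinearMap.mulLeft_apply]
      have := mem_box.mp hA
      refine mem_box.mpr ⟨?_, ?_⟩
      · refine le_trans (degreeOf_mul_le _ _ _) ?_
        rw [← hc0]; omega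
      · refine le_trans (degreeOf_mul_le _ _ _) ?_
        rw [← hd0]; omega
  have hUker : ∀ q ∈ U1 ⊔ U2, q ∈ LinearMap.ker (evL pts) := by
    intro q hq
    refine (sup_le ?_ ?_ : U1 ⊔ U2 ≤ LinearMap.ker (evL pts)) hq
    · rintro _ ⟨A, hA, rfl⟩
      rw [LinearMap.mem_ker]
      funext s
      show eval (vars (pts s)) (p * A) = 0
      rw [map_mul, hzp, zero_mul]
    · rintro _ ⟨A, hA, rfl⟩
      rw [LinearMap.mem_ker]
      funext s
      show eval (vars (pts s)) (P * A) = 0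
      rw [map_mul, hzP, zero_mul]
  -- surjectivity of evaluation from W
  set evW : W →ₗ[ℂ] (Fin n → ℂ) := (evL pts).comp W.subtype with hevW
  have hsurj : Function.Surjective evW := by
    intro v
    obtain ⟨q, hq, hval⟩ := ev_surj (α := a0 + c0 + n) (β := b0 + d0 + n) pts hinj
      (by omega) (by omega) v
    refine ⟨⟨q, hq⟩, funext fun s => ?_⟩
    rw [hevW, LinearMap.comp_apply, Submodule.subtype_apply]
    exact hval s
  have hrank : Module.finrank ℂ (LinearMap.ker evW) + n = Module.finrank ℂ W := by
    have := LinearMap.finrank_range_add_finrank_ker evW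
    rw [LinearMap.range_eq_top.mpr hsurj, finrank_top] at this
    rw [Module.finrank_pi ℂ] at this
    simp at this
    omega
  -- K' = W ⊓ ker
  have hK' : Module.finrank ℂ (W ⊓ LinearMap.ker (evL pts) : Submodule ℂ _)
      = Module.finrank ℂ (LinearMap.ker evW) := by
    have e : Module.finrank ℂ (LinearMap.ker evW)
        = Module.finrank ℂ (Submodule.map W.subtype (LinearMap.ker evW)) :=
      (Submodule.equivMapOfInjective W.subtype (Submodule.injective_subtype W)
        (LinearMap.ker evW)).finrank_eq
    have hmap : Submodule.map W.subtype (LinearMap.ker evW)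
        = W ⊓ LinearMap.ker (evL pts) := by
      rw [hevW, LinearMap.ker_comp, Submodule.map_comap_subtype]
    rw [e, hmap]
  have hKfin : FiniteDimensional ℂ (W ⊓ LinearMap.ker (evL pts) : Submodule ℂ _) :=
    Submodule.finiteDimensional_of_le inf_le_left
  have hUle : U1 ⊔ U2 ≤ W ⊓ LinearMap.ker (evL pts) :=
    le_inf (fun q hq => hUW q hq) (fun q hq => hUker q hq)
  have hU12fin : FiniteDimensional ℂ (U1 ⊔ U2 : Submodule ℂ _) := inferInstance
  have h3 : Module.finrank ℂ (U1 ⊔ U2 : Submodule ℂ _)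
      ≤ Module.finrank ℂ (W ⊓ LinearMap.ker (evL pts) : Submodule ℂ _) :=
    Submodule.finrank_mono hUle
  have h1 := Submodule.finrank_sup_add_finrank_inf_eq U1 U2
  have h2 : Module.finrank ℂ (U1 ⊓ U2 : Submodule ℂ _) ≤ (n+1)*(n+1) := by
    refine le_trans (Submodule.finrank_mono hinf) ?_
    refine le_trans (Submodule.finrank_map_le _ _) ?_
    rw [finrank_box]
  have hWr : Module.finrank ℂ W = (a0+c0+n+1)*(b0+d0+n+1) := finrank_box _ _
  have key : (a0+c0+n+1)*(b0+d0+n+1) + (n+1)*(n+1)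
      = (c0+n+1)*(d0+n+1) + (a0+n+1)*(b0+n+1) + (a0*d0 + b0*c0) := by ring
  rw [hr1, hr2] at h1
  rw [hWr] at hrank
  rw [hK'] at h3
  omega


def e (t : ℝ) : ℂ := Complex.exp (2 * Real.pi * Complex.I * t)

def pt (y : ℝ × ℝ) : ℂ × ℂ := (e y.1, e y.2)

lemma mem_rectZ {a b : ℕ} {k : ℤ × ℤ} :
    k ∈ rectZ a b ↔ (0 ≤ k.1 ∧ k.1 < a) ∧ (0 ≤ k.2 ∧ k.2 < b) := by
  simp [rectZ, Finset.mem_Ico]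

lemma trigExp_eq {k : ℤ × ℤ} (h1 : 0 ≤ k.1) (h2 : 0 ≤ k.2) (y : ℝ × ℝ) :
    trigExp k y = (e y.1) ^ k.1.toNat * (e y.2) ^ k.2.toNat := by
  rw [trigExp, e, e]
  rw [← Complex.exp_nat_mul, ← Complex.exp_nat_mul, ← Complex.exp_add]
  congr 1
  have e1 : ((k.1.toNat : ℕ) : ℂ) = (k.1 : ℂ) := by
    exact_mod_cast congrArg (fun z : ℤ => (z : ℂ)) (Int.toNat_of_nonneg h1)
  have e2 : ((k.2.toNat : ℕ) : ℂ) = (k.2 : ℂ) := by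
    exact_mod_cast congrArg (fun z : ℤ => (z : ℂ)) (Int.toNat_of_nonneg h2)
  rw [e1, e2]; ring

lemma eval_assoc (Λ : Finset (ℤ × ℤ)) (hΛ : ∀ k ∈ Λ, 0 ≤ k.1 ∧ 0 ≤ k.2)
    (c : ℤ × ℤ → ℂ) (y : ℝ × ℝ) :
    eval (vars (pt y)) (assocPolyZ Λ c) = trigPolyZ Λ c y := by
  rw [assocPolyZ, trigPolyZ, map_sum]
  refine Finset.sum_congr rfl fun k hk => ?_
  rw [trigExp_eq (hΛ k hk).1 (hΛ k hk).2]
  simp [vars, pt, mul_assoc]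

lemma e_inj {u v : ℝ} (hu : u ∈ Set.Ico (0:ℝ) 1) (hv : v ∈ Set.Ico (0:ℝ) 1)
    (h : e u = e v) : u = v := by
  rw [e, e, Complex.exp_eq_exp_iff_exists_int] at h
  obtain ⟨n, hn⟩ := h
  have h2 : (2 * (Real.pi:ℂ) * Complex.I) * u = (2 * (Real.pi:ℂ) * Complex.I) * (v + n) := by
    rw [hn]; ring
  have hne : (2 * (Real.pi:ℂ) * Complex.I) ≠ 0 := by
    simp [Real.pi_ne_zero, Complex.I_ne_zero]
  have h3 : (u : ℂ) = (v : ℂ) + (n : ℂ) := mul_left_cancel₀ hne h2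
  have h4 : u = v + (n : ℝ) := by
    exact_mod_cast h3
  have hn0 : n = 0 := by
    have h5 : (n : ℝ) = u - v := by linarith
    obtain ⟨hu0, hu1⟩ := hu
    obtain ⟨hv0, hv1⟩ := hv
    have : (-1 : ℝ) < n := by rw [h5]; linarith
    have : (n : ℝ) < 1 := by rw [h5]; linarith
    exact_mod_cast by
      have h6 : (-1 : ℤ) < n := by exact_mod_cast ‹(-1:ℝ) < n›
      have h7 : n < 1 := by exact_mod_cast ‹(n:ℝ) < 1›
      omega
  rw [hn0] at h4
  simpa using h4

lemma degreeOf_assoc_le (Λ : Finset (ℤ × ℤ)) (c : ℤ × ℤ → ℂ) {α β : ℕ}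
    (h : ∀ k ∈ Λ, k.1.toNat ≤ α ∧ k.2.toNat ≤ β) :
    degreeOf 0 (assocPolyZ Λ c) ≤ α ∧ degreeOf 1 (assocPolyZ Λ c) ≤ β := by
  constructor
  · refine le_trans (degreeOf_sum_le _ _ _) (Finset.sup_le fun k hk => ?_)
    refine le_trans (degreeOf_mul_le _ _ _) ?_
    have h1 : degreeOf (0 : Fin 2) (MvPolynomial.C (c k) * X 0 ^ k.1.toNat
        : MvPolynomial (Fin 2) ℂ) ≤ k.1.toNat := by
      refine le_trans (degreeOf_mul_le _ _ _) ?_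
      have := degreeOf_pow_le (0 : Fin 2) (X 0 : MvPolynomial (Fin 2) ℂ) k.1.toNat
      simp only [degreeOf_C, zero_add]
      refine le_trans this ?_
      simp [degreeOf_X]
    have h2 : degreeOf (0 : Fin 2) ((X 1 : MvPolynomial (Fin 2) ℂ) ^ k.2.toNat) = 0 := by
      refine Nat.le_zero.mp ?_
      refine le_trans (degreeOf_pow_le _ _ _) ?_
      simp [degreeOf_X]
    rw [h2, add_zero]
    exact le_trans h1 (h k hk).1
  · refine le_trans (degreeOf_sum_le _ _ _) (Finset.sup_le fun k hk => ?_)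
    refine le_trans (degreeOf_mul_le _ _ _) ?_
    have h1 : degreeOf (1 : Fin 2) (MvPolynomial.C (c k) * X 0 ^ k.1.toNat
        : MvPolynomial (Fin 2) ℂ) = 0 := by
      refine Nat.le_zero.mp ?_
      refine le_trans (degreeOf_mul_le _ _ _) ?_
      simp only [degreeOf_C, zero_add]
      refine le_trans (degreeOf_pow_le _ _ _) ?_
      simp [degreeOf_X]
    have h2 : degreeOf (1 : Fin 2) ((X 1 : MvPolynomial (Fin 2) ℂ) ^ k.2.toNat)
        ≤ k.2.toNat := by
      refine le_trans (degreeOf_pow_le _ _ _) ?_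
      simp [degreeOf_X]
    rw [h1, zero_add]
    exact le_trans h2 (h k hk).2


end
end SOS

/-- Sum-of-squares recovery of the curve: under the over-estimated-support sampling
conditions, if `μ₁,…,μ_Q` is a basis of the space of trigonometric polynomials with
support in `Γ` vanishing at all sample points, then the sum-of-squares function
`γ(x) = ∑ᵢ |μᵢ(x)|²` vanishes at `x ∈ [0,1)²` iff `ψ(x) = 0`. -/
theorem sos_zero_set (J : ℕ) (k1 k2 : Fin J → ℕ)
    (K₁ K₂ l₁ l₂ : ℕ) (hl₁ : K₁ ≤ l₁) (hl₂ : K₂ ≤ l₂)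
    (d : Fin J → ℤ × ℤ → ℂ)
    (hirr : ∀ j, Irreducible (assocPolyZ (rectZ (k1 j) (k2 j)) (d j)))
    (c : ℤ × ℤ → ℂ) (hcsupp : ∀ k, c k ≠ 0 → k ∈ rectZ K₁ K₂) (hc : c ≠ 0)
    (hfact : ∀ x : ℝ × ℝ,
      trigPolyZ (rectZ K₁ K₂) c x = ∏ j, trigPolyZ (rectZ (k1 j) (k2 j)) (d j) x)
    (N : Fin J → ℕ) (x : (j : Fin J) → Fin (N j) → ℝ × ℝ)
    (hinj : ∀ j, Function.Injective (x j))
    (hdom : ∀ j i, (x j i).1 ∈ Set.Ico (0 : ℝ) 1 ∧ (x j i).2 ∈ Set.Ico (0 : ℝ) 1)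
    (hsamp : ∀ j i, trigPolyZ (rectZ (k1 j) (k2 j)) (d j) (x j i) = 0)
    (hN : ∀ j, (l₁ + l₂) * (k1 j + k2 j) < N j)
    (Q : ℕ) (E : Fin Q → ℤ × ℤ → ℂ)
    (hEsupp : ∀ i k, E i k ≠ 0 → k ∈ rectZ l₁ l₂)
    (hEzero : ∀ i j s, trigPolyZ (rectZ l₁ l₂) (E i) (x j s) = 0)
    (hEindep : LinearIndependent ℂ E)
    (hEspan : ∀ v : ℤ × ℤ → ℂ, (∀ k, v k ≠ 0 → k ∈ rectZ l₁ l₂) →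
      (∀ j s, trigPolyZ (rectZ l₁ l₂) v (x j s) = 0) →
      ∃ a : Fin Q → ℂ, ∀ k, v k = ∑ i, a i * E i k) :
    ∀ y : ℝ × ℝ, y.1 ∈ Set.Ico (0 : ℝ) 1 → y.2 ∈ Set.Ico (0 : ℝ) 1 →
      ((∑ i, ‖trigPolyZ (rectZ l₁ l₂) (E i) y‖ ^ 2 = 0) ↔
        trigPolyZ (rectZ K₁ K₂) c y = 0) := by
  intro y hy1 hy2
  classical
  have hptinj : ∀ j, Function.Injective (fun s => SOS.pt (x j s)) := by
    intro j s t hst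
    apply hinj j
    have h1 := congrArg Prod.fst hst
    have h2 := congrArg Prod.snd hst
    exact Prod.ext (SOS.e_inj (hdom j s).1 (hdom j t).1 h1)
      (SOS.e_inj (hdom j s).2 (hdom j t).2 h2)
  have hrect : ∀ (a b : ℕ), ∀ k ∈ rectZ a b, 0 ≤ k.1 ∧ 0 ≤ k.2 := by
    intro a b k hk; rw [SOS.mem_rectZ] at hk; exact ⟨hk.1.1, hk.2.1⟩
  have hdvd : ∀ (j : Fin J) (i : Fin Q),
      assocPolyZ (rectZ (k1 j) (k2 j)) (d j) ∣ assocPolyZ (rectZ l₁ l₂) (E i) := by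
    intro j i
    have hdegp := SOS.degreeOf_assoc_le (rectZ (k1 j) (k2 j)) (d j)
      (α := k1 j) (β := k2 j) (by intro k hk; rw [SOS.mem_rectZ] at hk; omega)
    have hdegP := SOS.degreeOf_assoc_le (rectZ l₁ l₂) (E i) (α := l₁) (β := l₂)
      (by intro k hk; rw [SOS.mem_rectZ] at hk; omega)
    refine SOS.bezout (hirr j) hdegp.1 hdegp.2 hdegP.1 hdegP.2
      (fun s => SOS.pt (x j s)) (hptinj j) ?_ ?_ ?_
    · have := hN j; nlinarith
    · intro s
      rw [SOS.eval_assoc _ (hrect _ _)]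
      exact hsamp j s
    · intro s
      rw [SOS.eval_assoc _ (hrect _ _)]
      exact hEzero i j s
  have hγ : (∑ i, ‖trigPolyZ (rectZ l₁ l₂) (E i) y‖ ^ 2 = 0)
      ↔ ∀ i, trigPolyZ (rectZ l₁ l₂) (E i) y = 0 := by
    rw [Finset.sum_eq_zero_iff_of_nonneg (fun i _ => sq_nonneg _)]
    constructor
    · intro h i
      have := h i (Finset.mem_univ i)
      rwa [pow_eq_zero_iff (two_ne_zero), norm_eq_zero] at this
    · intro h i _
      rw [h i, norm_zero]
      norm_num
  rw [hγ]
  have hsub : rectZ K₁ K₂ ⊆ rectZ l₁ l₂ := by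
    intro k hk
    rw [SOS.mem_rectZ] at hk ⊢
    omega
  have hext : ∀ z, trigPolyZ (rectZ l₁ l₂) c z = trigPolyZ (rectZ K₁ K₂) c z := by
    intro z
    rw [trigPolyZ, trigPolyZ]
    refine (Finset.sum_subset hsub ?_).symm
    intro k _ hk
    have hc0 : c k = 0 := by
      by_contra hc0
      exact hk (hcsupp k hc0)
    rw [hc0, zero_mul]
  constructor
  · intro hall
    have hvan : ∀ j s, trigPolyZ (rectZ l₁ l₂) c (x j s) = 0 := by
      intro j s
      rw [hext, hfact]
      exact Finset.prod_eq_zero (Finset.mem_univ j) (hsamp j s)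
    obtain ⟨a, ha⟩ := hEspan c (fun k hk => hsub (hcsupp k hk)) hvan
    have hzero : trigPolyZ (rectZ l₁ l₂) c y = 0 := by
      rw [trigPolyZ]
      have hterm : ∀ k ∈ rectZ l₁ l₂,
          c k * trigExp k y = ∑ i, a i * (E i k * trigExp k y) := by
        intro k _
        rw [ha k, Finset.sum_mul]
        exact Finset.sum_congr rfl fun i _ => by ring
      rw [Finset.sum_congr rfl hterm, Finset.sum_comm]
      refine Finset.sum_eq_zero fun i _ => ?_
      rw [← Finset.mul_sum]
      have hi := hall i
      rw [trigPolyZ] at hi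
      rw [hi, mul_zero]
    rw [← hext]
    exact hzero
  · intro hψ i
    rw [hfact] at hψ
    obtain ⟨j, _, hj⟩ := Finset.prod_eq_zero_iff.mp hψ
    obtain ⟨h, hh⟩ := hdvd j i
    have he := SOS.eval_assoc (rectZ l₁ l₂) (hrect _ _) (E i) y
    rw [← he, hh, map_mul, SOS.eval_assoc _ (hrect _ _), hj, zero_mul]
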